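/- Let (S, 𝒜, μ) be a measure space, F a real Banach space, and v : S → F Bochner integrable with ∫ v dμ ≠ 0. Let g : ℕ → S → ℝ be measurable functions with gₙ(s) → −∞ as n → ∞ for μ-almost every s, and let σ(t) = (1 + exp(−t))⁻¹ denote the logistic function. Then ∫ σ(−gₙ(s)) • v(s) dμ(s) → ∫ v dμ as n → ∞; in particular the limit is nonzero, so the DPO influence term, whose weight on a flipped data point is σ(−g_θ(s_flip)), does not vanish in the worst-case limit g_θ(s_flip) → −∞: DPO does not satisfy the redescending property. -/
import Mathlib


open Filter Topology MeasureTheory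

noncomputable def logistic (t : ℝ) : ℝ := (1 + Real.exp (-t))⁻¹

theorem stmt5
    {S : Type*} [MeasurableSpace S] (μ : Measure S)
    {F : Type*} [NormedAddCommGroup F] [NormedSpace ℝ F] [CompleteSpace F]
    (v : S → F) (hv : Integrable v μ) (hv0 : (∫ s, v s ∂μ) ≠ 0)
    (g : ℕ → S → ℝ) (hg : ∀ n, Measurable (g n))
    (hgt : ∀ᵐ s ∂μ, Tendsto (fun n => g n s) atTop atBot) :
    Tendsto (fun n => ∫ s, logistic (-(g n s)) • v s ∂μ) atTop (𝓝 (∫ s, v s ∂μ)) ∧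
      (∫ s, v s ∂μ) ≠ 0 := by
  refine ⟨?_, hv0⟩
  have hcont : Continuous logistic := by
    have : ∀ t : ℝ, 1 + Real.exp (-t) ≠ 0 := fun t =>
      ne_of_gt (by positivity)
    exact ((continuous_const.add (Real.continuous_exp.comp continuous_neg)).inv₀ this)
  have habs : ∀ t : ℝ, |logistic t| ≤ 1 := by
    intro t
    rw [abs_of_nonneg (by unfold logistic; positivity)]
    unfold logistic
    rw [inv_le_one_iff₀]
    right
    linarith [Real.exp_pos (-t)]
  refine tendsto_integral_of_dominated_convergence (fun s => ‖v s‖) ?_ hv.norm ?_ ?_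
  · intro n
    exact (((hcont.measurable.comp ((hg n).neg)).aestronglyMeasurable).smul
      hv.aestronglyMeasurable)
  · intro n
    filter_upwards with s
    rw [norm_smul]
    calc ‖logistic (-(g n s))‖ * ‖v s‖ ≤ 1 * ‖v s‖ := by
          apply mul_le_mul_of_nonneg_right _ (norm_nonneg _)
          simpa [Real.norm_eq_abs] using habs (-(g n s))
      _ = ‖v s‖ := one_mul _
  · filter_upwards [hgt] with s hs
    have h1 : Tendsto (fun n => -(g n s)) atTop atTop := tendsto_neg_atBot_atTop.comp hs
    have h2 : Tendsto (fun n => logistic (-(g n s))) atTop (𝓝 1) := by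
      have he : Tendsto (fun n => Real.exp (-(-(g n s)))) atTop (𝓝 0) :=
        Real.tendsto_exp_atBot.comp (tendsto_neg_atTop_atBot.comp h1)
      have : Tendsto (fun n => (1 + Real.exp (-(-(g n s))))⁻¹) atTop (𝓝 (1 + 0)⁻¹) :=
        (Tendsto.const_add 1 he).inv₀ (by norm_num)
      simpa [logistic] using this
    simpa using h2.smul_const (v s)
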